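/- Let δ(A,B) denote the Matrix Reducing evaluation: for a d_out × d matrix A and a d_in × m matrix B with d_in dividing d and d ≥ m, δ(A,B) = Σ_{o=1}^{d_in} Ã^(o) ⊙ B̃^(o), where Ã^(o) and B̃^(o) are the d_out × m top-left submatrices of ξ^(o-1)(σ(A)) and ψ^(o-1)(τ(B)) respectively. Then for any d_out × d_in matrix A, any d_in × d_in matrix B1, and any d_in × m' matrix B2 with m' ≤ d_in, the horizontal concatenation of δ(A, B1) and δ(A, B2) equals δ of the horizontal concatenation (A | A) with the horizontal concatenation (B1 | B2). -/
import Mathlib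


open Matrix BigOperators

/-- The Matrix Reducing evaluation `δ(A, B)`: `A` is a `dout × d` matrix, `B` is a
`din × m` matrix; entry `(j,k)` is `∑ o, A[j, (j+k+o) mod d] * B[(j+k+o) mod din, k]`
(0-based cyclic indexing), i.e. the sum of entrywise products of the `dout × m`
top-left submatrices of `ξ^(o-1)(σ(A))` and `ψ^(o-1)(τ(B))`. -/
noncomputable def deltaMR {dout d din m : ℕ} (hd : 0 < d) (hdin : 0 < din)
    (A : Matrix (Fin dout) (Fin d) ℝ) (B : Matrix (Fin din) (Fin m) ℝ) :
    Matrix (Fin dout) (Fin m) ℝ :=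
  fun j k => ∑ o : Fin din,
    A j ⟨(j.val + k.val + o.val) % d, Nat.mod_lt _ hd⟩ *
    B ⟨(j.val + k.val + o.val) % din, Nat.mod_lt _ hdin⟩ k

/-- Horizontal concatenation of matrices with equal row counts. -/
def hcat {r n1 n2 : ℕ} (M1 : Matrix (Fin r) (Fin n1) ℝ) (M2 : Matrix (Fin r) (Fin n2) ℝ) :
    Matrix (Fin r) (Fin (n1 + n2)) ℝ :=
  fun j k => if h : k.val < n1 then M1 j ⟨k.val, h⟩ else M2 j ⟨k.val - n1, by omega⟩

lemma hcat_self_mod {dout din : ℕ} (hdin : 0 < din) (A : Matrix (Fin dout) (Fin din) ℝ)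
    (j : Fin dout) (x : ℕ) :
    hcat A A j ⟨x % (din + din), Nat.mod_lt _ (by omega)⟩ =
      A j ⟨x % din, Nat.mod_lt _ hdin⟩ := by
  have hlt : x % (din + din) < din + din := Nat.mod_lt _ (by omega)
  have hmm : (x % (din + din)) % din = x % din := Nat.mod_mod_of_dvd _ ⟨2, by ring⟩
  unfold hcat
  dsimp only
  split
  · next h => exact congrArg (A j) (Fin.ext (by show x % (din + din) = x % din; rw [← hmm, Nat.mod_eq_of_lt h]))
  · next h => exact congrArg (A j) (Fin.ext (by
      show x % (din + din) - din = x % din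
      rw [← hmm]
      exact ((Nat.mod_eq_sub_mod (show din ≤ x % (din + din) by omega)).trans
        (Nat.mod_eq_of_lt (by omega))).symm))

/-- Composition lemma for Matrix Reducing: `(δ(A,B1) | δ(A,B2)) = δ((A|A),(B1|B2))`. -/
theorem matrix_reducing_composition (dout din m' : ℕ) (hdin : 0 < din) (hm' : m' ≤ din)
    (A : Matrix (Fin dout) (Fin din) ℝ)
    (B1 : Matrix (Fin din) (Fin din) ℝ) (B2 : Matrix (Fin din) (Fin m') ℝ) :
    hcat (deltaMR hdin hdin A B1) (deltaMR hdin hdin A B2) =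
      deltaMR (by omega) hdin (hcat A A) (hcat B1 B2) := by
  funext j k
  show hcat _ _ j k = deltaMR _ _ _ _ j k
  by_cases hk : k.val < din
  · rw [show hcat (deltaMR hdin hdin A B1) (deltaMR hdin hdin A B2) j k
        = deltaMR hdin hdin A B1 j ⟨k.val, hk⟩ from dif_pos hk]
    unfold deltaMR
    apply Finset.sum_congr rfl
    intro o _
    rw [hcat_self_mod hdin A j]
    congr 1
    unfold hcat
    simp [hk]
  · rw [show hcat (deltaMR hdin hdin A B1) (deltaMR hdin hdin A B2) j k
        = deltaMR hdin hdin A B2 j ⟨k.val - din, by omega⟩ from dif_neg hk]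
    unfold deltaMR
    apply Finset.sum_congr rfl
    intro o _
    rw [hcat_self_mod hdin A j]
    have hmod : (j.val + (k.val - din) + o.val) % din = (j.val + k.val + o.val) % din := by
      have : j.val + k.val + o.val = (j.val + (k.val - din) + o.val) + din := by omega
      rw [this, Nat.add_mod_right]
    congr 1
    · exact congrArg (A j) (Fin.ext hmod)
    · unfold hcat
      simp only [hk, dif_neg, not_false_iff]
      exact congrFun (congrArg B2 (Fin.ext hmod)) _
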